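/- Let Y be a V-category over a unital integral quantale V, let X = {(x,y,z) ∈ Y³ : y = z or x = y} with X(p,q) = Y(p₁,q₁) ∧ Y(p₂,q₂) ∧ Y(p₃,q₃), and g : X → Y with g(x,y,y) = x, g(y,y,x) = x. If g is a V-functor (X(p,q) ≤ Y(g p, g q) for all p,q ∈ X), then for all x,y,z ∈ Y: Y(z,x) ∧ Y(z,y) ≤ Y(x,y). -/
import Mathlib

/-- If the map `g : X → Y`, `g(x,y,y) = x`, `g(y,y,x) = x` on
`X = {(x,y,z) : y = z or x = y} ⊆ Y³` (with the meet structure) is a `V`-functor,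
then `Y(z,x) ∧ Y(z,y) ≤ Y(x,y)` for all `x, y, z`. -/
theorem V_functor_implies_condition_ii {V : Type*} [CompleteLattice V] [Monoid V]
    (hone : (1 : V) = ⊤)
    (hdistl : ∀ (a : V) (s : Set V), a * sSup s = ⨆ b ∈ s, a * b)
    (hdistr : ∀ (a : V) (s : Set V), sSup s * a = ⨆ b ∈ s, b * a)
    {Y : Type*} (d : Y → Y → V)
    (hrefl : ∀ x : Y, ⊤ ≤ d x x)
    (htrans : ∀ x y z : Y, d x y * d y z ≤ d x z)
    (g : {p : Y × Y × Y // p.2.1 = p.2.2 ∨ p.1 = p.2.1} → Y)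
    (hg1 : ∀ x y : Y, g ⟨(x, y, y), Or.inl rfl⟩ = x)
    (hg2 : ∀ x y : Y, g ⟨(y, y, x), Or.inr rfl⟩ = x)
    (hgfun : ∀ p q : {p : Y × Y × Y // p.2.1 = p.2.2 ∨ p.1 = p.2.1},
      d p.val.1 q.val.1 ⊓ d p.val.2.1 q.val.2.1 ⊓ d p.val.2.2 q.val.2.2
        ≤ d (g p) (g q)) :
    ∀ x y z : Y, d z x ⊓ d z y ≤ d x y := by
  intro x y z
  have h := hgfun ⟨(x, z, z), Or.inl rfl⟩ ⟨(x, x, y), Or.inr rfl⟩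
  simp only [hg1, hg2] at h
  have hxx : d x x = ⊤ := le_antisymm le_top (hrefl x)
  calc d z x ⊓ d z y = d x x ⊓ d z x ⊓ d z y := by rw [hxx, top_inf_eq]
    _ ≤ d x y := h
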